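/- Rank of the differential of a slice regular function: let f : Ω_D → ℍ be slice regular with continuously differentiable stem components, and let x₀ = α + Jβ ∈ Ω_D with β > 0, J ∈ 𝕊. (i) If ∂_s f(x₀) = 0 and (∂f/∂x)(x₀) ≠ 0, then the real Fréchet derivative (df)_{x₀} : ℍ → ℍ has rank 2. (ii) If ∂_s f(x₀) = 0 and (∂f/∂x)(x₀) = 0, then (df)_{x₀} = 0. (iii) If ∂_s f(x₀) ≠ 0, then (df)_{x₀} is not invertible if and only if (∂f/∂x)(x₀)·(∂_s f(x₀))⁻¹ lies in the orthogonal complement of ℂ_J = ℝ + ℝJ in ℍ ≅ ℝ⁴. -/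

import Mathlib

/- Identify ℍ with `Quaternion ℝ` (a real inner product space), `Im x = x - Re x`,
conjugation `star`.  A slice regular function on the circularization of a
conjugation-symmetric open set `D ⊆ ℂ` is induced by a stem function `(F₁, F₂)`
with continuously differentiable components satisfying the Cauchy-Riemann
system.  The slice derivative `∂f/∂x` is induced by `(∂F₁/∂α, ∂F₂/∂α)`; the
spherical derivative is `∂ₛf x = (1/2)(Im x)⁻¹(f x - f (x^c))`. -/


open Quaternion RealInnerProductSpace

/- ### Auxiliary lemmas -/

lemma qre_mul_comm (a b : ℍ) : (a * b).re = (b * a).re := by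
  simp only [Quaternion.re_mul]; ring

lemma unit_re_zero {J : ℍ} (hJ : J * J = -1) : J.re = 0 := by
  have h1 := congrArg QuaternionAlgebra.re hJ
  have h2 := congrArg QuaternionAlgebra.imI hJ
  have h3 := congrArg QuaternionAlgebra.imJ hJ
  have h4 := congrArg QuaternionAlgebra.imK hJ
  simp [Quaternion.re_mul, Quaternion.imI_mul, Quaternion.imJ_mul, Quaternion.imK_mul] at h1 h2 h3 h4
  nlinarith [sq_nonneg J.re, sq_nonneg J.imI, sq_nonneg J.imJ, sq_nonneg J.imK]

lemma unit_normSq {J : ℍ} (hJ : J * J = -1) : Quaternion.normSq J = 1 := by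
  have h0 := unit_re_zero hJ
  have h1 := congrArg QuaternionAlgebra.re hJ
  simp [Quaternion.re_mul, h0] at h1
  simp [Quaternion.normSq_def', h0]
  linarith

lemma im_sq {q : ℍ} (h : q.re = 0) : q * q = -((Quaternion.normSq q : ℝ) : ℍ) := by
  have hs : star q = -q := by ext <;> simp [h]
  have := Quaternion.self_mul_star (a := q)
  rw [hs, mul_neg] at this
  rw [← this, neg_neg]

noncomputable def reC : ℍ →L[ℝ] ℝ :=
  LinearMap.toContinuousLinearMap
    { toFun := QuaternionAlgebra.re
      map_add' := fun _ _ => rfl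
      map_smul' := fun _ _ => rfl }

noncomputable def imC : ℍ →L[ℝ] ℍ :=
  LinearMap.toContinuousLinearMap
    { toFun := fun v => v - ((v.re : ℝ) : ℍ)
      map_add' := by intro a b; push_cast [Quaternion.re_add]; abel
      map_smul' := by
        intro r v
        show r • v - ((r • v.re : ℝ) : ℍ) = r • (v - ((v.re : ℝ) : ℍ))
        rw [smul_sub, smul_eq_mul, ← Quaternion.smul_coe] }

@[simp] lemma reC_apply (v : ℍ) : reC v = v.re := rfl
@[simp] lemma imC_apply (v : ℍ) : imC v = v - ((v.re : ℝ) : ℍ) := rfl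

noncomputable def PJ (J : ℍ) : ℍ →ₗ[ℝ] ℍ where
  toFun v := v.re • (1:ℍ) + ⟪v,J⟫ • J
  map_add' a b := by
    simp only [Quaternion.re_add, inner_add_left, add_smul]; module
  map_smul' r v := by
    simp only [Quaternion.re_smul, real_inner_smul_left, smul_eq_mul, RingHom.id_apply,
      mul_smul, smul_add]

noncomputable def ellC (J sld sph : ℍ) : ℍ →L[ℝ] ℍ :=
  LinearMap.toContinuousLinearMap
    ((LinearMap.mulRight ℝ sld).comp (PJ J) +
      (LinearMap.mulRight ℝ sph).comp (LinearMap.id - PJ J))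

lemma ellC_apply (J sld sph v : ℍ) :
    ellC J sld sph v =
      (v.re • (1:ℍ) + ⟪v,J⟫ • J) * sld + (v - (v.re • (1:ℍ) + ⟪v,J⟫ • J)) * sph := rfl

lemma inner_coe_J (r : ℝ) (J : ℍ) : ⟪((r:ℝ):ℍ), J⟫ = r * J.re := by
  rw [Quaternion.inner_def, Quaternion.coe_mul_eq_smul]
  simp [Quaternion.re_smul]

lemma mem_perp_iff {J : ℍ} (hJre : J.re = 0) (u : ℍ) :
    u ∈ (Submodule.span ℝ ({1, J} : Set ℍ))ᗮ ↔ u.re = 0 ∧ (u * J).re = 0 := by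
  have hs : star J = -J := by ext <;> simp [hJre]
  have hinner1 : ∀ w : ℍ, ⟪(1:ℍ), w⟫ = w.re := fun w => by
    simp [Quaternion.inner_def]
  have hinnerJ : ∀ w : ℍ, ⟪J, w⟫ = -(w * J).re := fun w => by
    rw [real_inner_comm, Quaternion.inner_def, hs]; simp
  rw [Submodule.mem_orthogonal]
  constructor
  · intro h
    constructor
    · rw [← hinner1 u]; exact h 1 (Submodule.subset_span (by simp))
    · have := h J (Submodule.subset_span (by simp)); rw [hinnerJ] at this; linarith
  · rintro ⟨h1, h2⟩ w hw
    obtain ⟨a, b, rfl⟩ := Submodule.mem_span_pair.mp hw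
    rw [inner_add_left, real_inner_smul_left, real_inner_smul_left, hinner1, hinnerJ, h1, h2]
    ring

lemma perp_mul {J c : ℍ} (hJJ : J * J = -1) (a b : ℝ) (h1 : c.re = 0) (h2 : (c * J).re = 0) :
    (((a : ℝ) • (1:ℍ) + b • J) * c).re = 0 ∧ ((((a : ℝ) • (1:ℍ) + b • J) * c) * J).re = 0 := by
  have hJc : (J * c).re = 0 := by rw [qre_mul_comm]; exact h2
  have hJcJ : ((J * c) * J).re = 0 := by
    rw [qre_mul_comm, ← mul_assoc, hJJ]; simp [h1]
  constructor
  · simp only [add_mul, smul_mul_assoc, one_mul, Quaternion.re_add, Quaternion.re_smul,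
      smul_eq_mul, h1, hJc, mul_zero, add_zero]
  · simp only [add_mul, smul_mul_assoc, one_mul, Quaternion.re_add, Quaternion.re_smul,
      smul_eq_mul, h2, hJcJ, mul_zero, add_zero]

lemma cj_inv (a b : ℝ) (J : ℍ) (hJJ : J * J = -1) :
    (a • (1:ℍ) + (-b) • J) * (a • (1:ℍ) + b • J) = ((a^2 + b^2) : ℝ) • 1 := by
  have : J * J = -((1:ℝ) • (1:ℍ)) := by rw [hJJ]; simp
  simp only [add_mul, mul_add, smul_mul_assoc, mul_smul_comm, one_mul, mul_one, smul_smul, this]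
  match_scalars <;> ring

lemma final_id (β r b : ℝ) (hβ : β ≠ 0) (A B S u J : ℍ) (hJJ : J * J = -1) :
    (r • A + b • -B)
      + (β⁻¹ • ((β • J) * (r • B + b • A) + u * (β • S))
          + (-(β^2)⁻¹ * b) • ((β • J) * (β • S)))
      = (r • (1:ℍ) + b • J) * (A + J * B) + (u - b • J) * S := by
  have hJJB : J * (J * B) = -B := by rw [← mul_assoc, hJJ]; simp
  have hJS : J * (J * S) = -S := by rw [← mul_assoc, hJJ]; simp
  simp only [mul_add, add_mul, sub_mul, smul_mul_assoc, mul_smul_comm, smul_add, smul_sub,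
    smul_smul, smul_neg, one_mul, neg_smul, neg_neg, hJJB, hJS]
  match_scalars <;> field_simp <;> (try ring) <;> exact Or.inl trivial
set_option maxHeartbeats 1000000 in

/-- **Rank of the differential of a slice regular function** at a nonreal point
`x₀ = α + Jβ`:
(i) if `∂ₛf(x₀) = 0` and `∂f/∂x(x₀) ≠ 0` then `(df)ₓ₀` has rank 2;
(ii) if `∂ₛf(x₀) = 0` and `∂f/∂x(x₀) = 0` then `(df)ₓ₀ = 0`;
(iii) if `∂ₛf(x₀) ≠ 0` then `(df)ₓ₀` is not invertible iff
`∂f/∂x(x₀)·(∂ₛf(x₀))⁻¹ ⊥ ℂ_J`. -/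
theorem differential_rank
    (D : Set ℂ) (hDopen : IsOpen D)
    (hDsymm : ∀ z ∈ D, (starRingEnd ℂ) z ∈ D)
    (F₁ F₂ : ℂ → Quaternion ℝ)
    (hstem : ∀ z ∈ D,
      F₁ ((starRingEnd ℂ) z) = F₁ z ∧ F₂ ((starRingEnd ℂ) z) = - F₂ z)
    (f : Quaternion ℝ → Quaternion ℝ)
    (hslice : ∀ z ∈ D, ∀ I : Quaternion ℝ, I ^ 2 = -1 →
      f ((z.re : Quaternion ℝ) + I * (z.im : Quaternion ℝ)) = F₁ z + I * F₂ z)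
    (D₁ D₂ : ℂ → (ℂ →L[ℝ] Quaternion ℝ))
    (hF₁ : ∀ z ∈ D, HasFDerivAt F₁ (D₁ z) z)
    (hF₂ : ∀ z ∈ D, HasFDerivAt F₂ (D₂ z) z)
    (hC1 : ContinuousOn D₁ D ∧ ContinuousOn D₂ D)
    (hCR : ∀ z ∈ D, D₁ z 1 = D₂ z Complex.I ∧ D₁ z Complex.I = - D₂ z 1)
    (z : ℂ) (hz : z ∈ D) (hβ : 0 < z.im)
    (J : Quaternion ℝ) (hJ : J ^ 2 = -1)
    (x₀ : Quaternion ℝ)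
    (hx₀ : x₀ = (z.re : Quaternion ℝ) + J * (z.im : Quaternion ℝ))
    (sph sld : Quaternion ℝ)
    (hsph : sph = (2 : ℝ)⁻¹ • ((Quaternion.im x₀)⁻¹ * (f x₀ - f (star x₀))))
    (hsld : sld = D₁ z 1 + J * (D₂ z 1)) :
    ∃ L : Quaternion ℝ →L[ℝ] Quaternion ℝ,
      HasFDerivAt f L x₀ ∧
      (sph = 0 → sld ≠ 0 →
        Module.finrank ℝ (LinearMap.range (L : Quaternion ℝ →ₗ[ℝ] Quaternion ℝ)) = 2) ∧
      (sph = 0 → sld = 0 → L = 0) ∧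
      (sph ≠ 0 →
        (¬ Function.Bijective L ↔
          sld * sph⁻¹ ∈ (Submodule.span ℝ ({1, J} : Set (Quaternion ℝ)))ᗮ)) := by
  have hJJ : J * J = -1 := by rw [← sq]; exact hJ
  have hJre : J.re = 0 := unit_re_zero hJJ
  have hJns : Quaternion.normSq J = 1 := unit_normSq hJJ
  have hJnorm : ‖J‖ = 1 := by
    rw [norm_eq_sqrt_real_inner, Quaternion.inner_self, hJns, Real.sqrt_one]
  have hJne : J ≠ 0 := by
    intro h; rw [h] at hJns; simp at hJns
  have hJstar : star J = -J := by ext <;> simp [hJre]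
  have hβ0 : z.im ≠ 0 := ne_of_gt hβ
  -- facts about x₀
  have hx₀re : x₀.re = z.re := by
    simp [hx₀, Quaternion.re_add, Quaternion.re_coe, Quaternion.mul_coe_eq_smul,
      Quaternion.re_smul, hJre]
  have hx₀im : x₀ - ((x₀.re : ℝ) : Quaternion ℝ) = z.im • J := by
    rw [hx₀re, hx₀, Quaternion.mul_coe_eq_smul]
    exact add_sub_cancel_left _ _
  have him_x₀ : Quaternion.im x₀ = z.im • J := by
    have h : Quaternion.im x₀ = x₀ - ((x₀.re : ℝ) : Quaternion ℝ) :=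
      eq_sub_iff_add_eq'.mpr (Quaternion.re_add_im x₀)
    rw [h, hx₀im]
  -- value of sph
  have hfx₀ : f x₀ = F₁ z + J * F₂ z := by
    have := hslice z hz J hJ; rw [← hx₀] at this; exact this
  have hsx : star x₀ = (z.re : Quaternion ℝ) + (-J) * (z.im : Quaternion ℝ) := by
    rw [hx₀]
    simp [star_add, star_mul, hJstar, Quaternion.mul_coe_eq_smul, smul_neg]
  have hfsx : f (star x₀) = F₁ z + (-J) * F₂ z := by
    have := hslice z hz (-J) (by rw [neg_sq]; exact hJ)
    rw [← hsx] at this; exact this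
  have hdiff : f x₀ - f (star x₀) = (2:ℝ) • (J * F₂ z) := by
    rw [hfx₀, hfsx]; simp only [neg_mul]; module
  have hinv : (z.im • J)⁻¹ = -((z.im)⁻¹ • J) := by
    apply inv_eq_of_mul_eq_one_right
    rw [mul_neg, smul_mul_assoc, mul_smul_comm, smul_smul, hJJ, mul_inv_cancel₀ hβ0]
    simp
  have hJJF : J * (J * F₂ z) = -(F₂ z) := by rw [← mul_assoc, hJJ]; simp
  have hsph' : sph = (z.im)⁻¹ • F₂ z := by
    rw [hsph, him_x₀, hinv, hdiff]
    simp only [neg_mul, smul_mul_assoc, mul_smul_comm, hJJF, smul_neg, neg_neg, smul_smul]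
    match_scalars
    field_simp
  refine ⟨ellC J sld sph, ?_, ?_, ?_, ?_⟩
  · -- the Fréchet derivative
    set N : Quaternion ℝ → ℝ := fun x => ‖x - ((x.re : ℝ) : Quaternion ℝ)‖ with hN
    set ζ : Quaternion ℝ → ℂ := fun x => ((x.re : ℝ) : ℂ) + N x • Complex.I with hζdef
    have hζre : ∀ x, (ζ x).re = x.re := fun x => by
      simp [hζdef, Complex.real_smul]
    have hζim : ∀ x, (ζ x).im = N x := fun x => by
      simp [hζdef, Complex.real_smul]
    have hNx₀ : N x₀ = z.im := by
      rw [hN]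
      simp only
      rw [hx₀im, norm_smul, hJnorm, mul_one, Real.norm_eq_abs, abs_of_pos hβ]
    have hζx₀ : ζ x₀ = z := by
      apply Complex.ext
      · rw [hζre, hx₀re]
      · rw [hζim, hNx₀]
    have hNcont : Continuous N :=
      (continuous_id.sub (Quaternion.continuous_coe.comp Quaternion.continuous_re)).norm
    have hζcont : Continuous ζ :=
      (Complex.continuous_ofReal.comp Quaternion.continuous_re).add
        (hNcont.smul continuous_const)
    have hfg : f =ᶠ[nhds x₀] fun x =>
        F₁ (ζ x) + (N x)⁻¹ • ((x - ((x.re : ℝ) : Quaternion ℝ)) * F₂ (ζ x)) := by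
      have hUopen : IsOpen {x : Quaternion ℝ | 0 < N x ∧ ζ x ∈ D} :=
        (isOpen_lt continuous_const hNcont).inter (hDopen.preimage hζcont)
      have hx₀U : x₀ ∈ {x : Quaternion ℝ | 0 < N x ∧ ζ x ∈ D} := by
        constructor
        · show 0 < N x₀
          rw [hNx₀]; exact hβ
        · show ζ x₀ ∈ D
          rw [hζx₀]; exact hz
      filter_upwards [hUopen.mem_nhds hx₀U] with x hx
      obtain ⟨hxN, hxD⟩ := hx
      have hqre : (x - ((x.re : ℝ) : Quaternion ℝ)).re = 0 := by
        simp [Quaternion.re_sub]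
      have hIre : ((N x)⁻¹ • (x - ((x.re : ℝ) : Quaternion ℝ))).re = 0 := by
        simp [Quaternion.re_smul, hqre]
      have hInorm : Quaternion.normSq ((N x)⁻¹ • (x - ((x.re : ℝ) : Quaternion ℝ))) = 1 := by
        rw [Quaternion.normSq_eq_norm_mul_self, norm_smul, Real.norm_eq_abs,
          abs_of_pos (inv_pos.mpr hxN)]
        show ((N x)⁻¹ * N x) * ((N x)⁻¹ * N x) = 1
        rw [inv_mul_cancel₀ (ne_of_gt hxN), one_mul]
      have hI2 : ((N x)⁻¹ • (x - ((x.re : ℝ) : Quaternion ℝ))) ^ 2 = -1 := by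
        rw [sq, im_sq hIre, hInorm]
        simp
      have hsl := hslice (ζ x) hxD _ hI2
      have hpt : (((ζ x).re : ℝ) : Quaternion ℝ)
          + ((N x)⁻¹ • (x - ((x.re : ℝ) : Quaternion ℝ))) * (((ζ x).im : ℝ) : Quaternion ℝ)
            = x := by
        rw [hζre, hζim, Quaternion.mul_coe_eq_smul, smul_smul, mul_inv_cancel₀ (ne_of_gt hxN),
          one_smul]
        abel
      rw [hpt] at hsl
      rw [hsl, smul_mul_assoc]
    -- derivative of N
    have him : HasFDerivAt (fun x : Quaternion ℝ => x - ((x.re : ℝ) : Quaternion ℝ)) imC x₀ :=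
      imC.hasFDerivAt
    have hip : ⟪x₀ - ((x₀.re : ℝ) : Quaternion ℝ), x₀ - ((x₀.re : ℝ) : Quaternion ℝ)⟫
        = z.im ^ 2 := by
      rw [hx₀im, real_inner_smul_left, real_inner_smul_right, Quaternion.inner_self, hJns]
      ring
    have hQder := him.inner ℝ him
    have hQne : ⟪x₀ - ((x₀.re : ℝ) : Quaternion ℝ), x₀ - ((x₀.re : ℝ) : Quaternion ℝ)⟫ ≠ 0 := by
      rw [hip]; positivity
    have hNder₀ := hQder.sqrt hQne
    have hNder : HasFDerivAt N (innerSL ℝ J) x₀ := by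
      have h1 : HasFDerivAt N
          ((1 / (2 * Real.sqrt ⟪x₀ - ((x₀.re : ℝ) : Quaternion ℝ),
              x₀ - ((x₀.re : ℝ) : Quaternion ℝ)⟫)) •
            ((fderivInnerCLM ℝ (x₀ - ((x₀.re : ℝ) : Quaternion ℝ),
                x₀ - ((x₀.re : ℝ) : Quaternion ℝ))).comp (imC.prod imC))) x₀ := by
        apply hNder₀.congr_of_eventuallyEq
        filter_upwards with x
        exact norm_eq_sqrt_real_inner _
      apply h1.congr_fderiv
      apply ContinuousLinearMap.ext
      intro v
      simp only [ContinuousLinearMap.smul_apply, ContinuousLinearMap.coe_comp',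
        Function.comp_apply, fderivInnerCLM_apply, ContinuousLinearMap.prod_apply,
        imC_apply, innerSL_apply_apply, smul_eq_mul]
      rw [hip, Real.sqrt_sq hβ.le, hx₀im]
      rw [real_inner_smul_left, real_inner_smul_right]
      have hJv : ⟪J, v - ((v.re : ℝ) : Quaternion ℝ)⟫ = ⟪J, v⟫ := by
        rw [inner_sub_right]
        have : ⟪J, ((v.re : ℝ) : Quaternion ℝ)⟫ = 0 := by
          rw [real_inner_comm, inner_coe_J, hJre, mul_zero]
        rw [this, sub_zero]
      have h2 : ⟪v - ((v.re : ℝ) : Quaternion ℝ), J⟫ = ⟪J, v⟫ := by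
        rw [real_inner_comm]; exact hJv
      rw [hJv, h2]
      field_simp
      ring
    -- derivative of ζ
    have hζder : HasFDerivAt ζ
        (Complex.ofRealCLM.comp reC + (innerSL ℝ J).smulRight Complex.I) x₀ :=
      ((Complex.ofRealCLM.comp reC).hasFDerivAt).add (hNder.smul_const Complex.I)
    -- derivatives of the composites
    have hF₁z := hF₁ z hz
    have hF₂z := hF₂ z hz
    rw [← hζx₀] at hF₁z hF₂z
    have h₁ := hF₁z.comp x₀ hζder
    have h₂ := hF₂z.comp x₀ hζder
    have h₃ := him.mul' h₂
    have hN0 : N x₀ ≠ 0 := by rw [hNx₀]; exact hβ0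
    have h₄ := (hasDerivAt_inv hN0).comp_hasFDerivAt x₀ hNder
    have h₅ := h₄.smul h₃
    have h₆ := h₁.add h₅
    refine (h₆.congr_of_eventuallyEq hfg).congr_fderiv ?_
    -- identify the derivative with ellC
    set S : Quaternion ℝ := (z.im)⁻¹ • F₂ z with hS
    have hF₂S : F₂ z = z.im • S := by
      rw [hS, smul_smul, mul_inv_cancel₀ hβ0, one_smul]
    apply ContinuousLinearMap.ext
    intro v
    have hcoe : ∀ r : ℝ, ((r : ℝ) : Quaternion ℝ) = r • (1 : Quaternion ℝ) := fun r => by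
      rw [← mul_one r, ← Quaternion.smul_coe, Quaternion.coe_one, mul_one]
    have hTC : ∀ (T : ℂ →L[ℝ] Quaternion ℝ) (r b : ℝ),
        T (((r : ℝ) : ℂ) + b • Complex.I) = r • T 1 + b • T Complex.I := by
      intro T r b
      have : ((r : ℝ) : ℂ) = r • (1 : ℂ) := by rw [Complex.real_smul, mul_one]
      rw [this, map_add, map_smul, map_smul]
    simp only [ContinuousLinearMap.add_apply, ContinuousLinearMap.coe_comp',
      Function.comp_apply, ContinuousLinearMap.smul_apply, ContinuousLinearMap.coe_smul',
      Pi.smul_apply, ContinuousLinearMap.smulRight_apply, imC_apply, reC_apply,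
      Complex.ofRealCLM_apply, innerSL_apply_apply, ellC_apply, Pi.mul_apply, op_smul_eq_mul]
    rw [hζx₀, hNx₀, hx₀im, hTC (D₁ z), hTC (D₂ z), (hCR z hz).2, ← (hCR z hz).1,
      hsld, hsph', hF₂S]
    have hJJB : J * (J * (D₂ z) 1) = -((D₂ z) 1) := by rw [← mul_assoc, hJJ]; simp
    have hJS : J * (J * S) = -S := by rw [← mul_assoc, hJJ]; simp
    have hbv : ⟪J, v⟫ = ⟪v, J⟫ := real_inner_comm _ _
    rw [hbv]
    simp only [mul_add, add_mul, sub_mul, smul_mul_assoc, mul_smul_comm, smul_add, smul_sub,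
      smul_smul, smul_neg, one_mul, neg_smul, neg_neg, hJJB, hJS, hcoe]
    simp only [smul_eq_mul, mul_add, add_mul, sub_mul, mul_sub, smul_mul_assoc, mul_smul_comm,
      smul_add, smul_sub, smul_smul, smul_neg, neg_smul, one_mul, mul_one, neg_neg,
      hJJB, hJS, hcoe]
    match_scalars <;> field_simp <;> (try ring) <;> exact Or.inl trivial
  · -- (i) rank 2
    intro h0 hne
    have hcomp : ((ellC J sld sph : Quaternion ℝ →L[ℝ] Quaternion ℝ) :
        Quaternion ℝ →ₗ[ℝ] Quaternion ℝ) = (LinearMap.mulRight ℝ sld).comp (PJ J) := by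
      apply LinearMap.ext; intro v
      show ellC J sld sph v = _
      rw [ellC_apply, h0, mul_zero, add_zero]
      rfl
    rw [hcomp, LinearMap.range_comp]
    have hrangeP : LinearMap.range (PJ J) = Submodule.span ℝ ({1, J} : Set (Quaternion ℝ)) := by
      apply le_antisymm
      · rintro x ⟨v, rfl⟩
        exact Submodule.mem_span_pair.mpr ⟨v.re, ⟪v,J⟫, rfl⟩
      · rw [Submodule.span_le]
        rintro x hx
        rcases hx with h | h
        · refine ⟨1, ?_⟩
          rw [h]
          show (1:ℍ).re • (1:ℍ) + ⟪(1:ℍ),J⟫ • J = 1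
          simp [Quaternion.inner_def, hJre]
        · refine ⟨J, ?_⟩
          rw [Set.mem_singleton_iff.mp h]
          show J.re • (1:ℍ) + ⟪J,J⟫ • J = J
          simp [Quaternion.inner_self, hJns, hJre, hJnorm]
    rw [hrangeP]
    have hinj : Function.Injective (LinearMap.mulRight ℝ sld) := by
      intro a b hab
      simp only [LinearMap.mulRight_apply] at hab
      exact mul_right_cancel₀ hne hab
    rw [← LinearEquiv.finrank_eq
      (Submodule.equivMapOfInjective _ hinj (Submodule.span ℝ ({1, J} : Set (Quaternion ℝ))))]
    have hli : LinearIndependent ℝ ![(1:ℍ), J] := by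
      rw [LinearIndependent.pair_iff' one_ne_zero]
      intro a hEq
      apply hJne
      have ha : a = 0 := by
        have := congrArg QuaternionAlgebra.re hEq
        simpa [Quaternion.re_smul, hJre] using this
      rw [← hEq, ha, zero_smul]
    have hcard := finrank_span_eq_card hli
    have hrange : Set.range ![(1:ℍ), J] = {1, J} := by
      ext x
      simp only [Set.mem_range, Fin.exists_fin_two, Set.mem_insert_iff, Set.mem_singleton_iff,
        Matrix.cons_val_zero, Matrix.cons_val_one, Matrix.head_cons]
      constructor
      · rintro (h | h)
        · exact Or.inl h.symm
        · exact Or.inr h.symm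
      · rintro (h | h)
        · exact Or.inl h.symm
        · exact Or.inr h.symm
    rw [hrange] at hcard
    simpa using hcard
  · -- (ii) zero
    intro h0 h0'
    refine ContinuousLinearMap.ext fun v => ?_
    rw [ContinuousLinearMap.zero_apply, ellC_apply, h0, h0', mul_zero, mul_zero, add_zero]
  · -- (iii)
    intro hsne
    have hcsph : (sld * sph⁻¹) * sph = sld := by
      rw [mul_assoc, inv_mul_cancel₀ hsne, mul_one]
    have hvJre : ∀ v : Quaternion ℝ, (v * J).re = -⟪v,J⟫ := by
      intro v
      rw [Quaternion.inner_def, hJstar, mul_neg, Quaternion.re_neg, neg_neg]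
    have hu : ∀ v : Quaternion ℝ, (v - (v.re • (1:ℍ) + ⟪v,J⟫ • J)).re = 0
        ∧ ((v - (v.re • (1:ℍ) + ⟪v,J⟫ • J)) * J).re = 0 := by
      intro v
      constructor
      · simp [Quaternion.re_sub, Quaternion.re_add, Quaternion.re_smul, hJre]
      · rw [sub_mul, add_mul, smul_mul_assoc, smul_mul_assoc, one_mul, hJJ]
        simp [Quaternion.re_sub, Quaternion.re_add, Quaternion.re_smul, hJre, hvJre v]
    have hLform : ∀ v : Quaternion ℝ, ellC J sld sph v
        = ((v.re • (1:ℍ) + ⟪v,J⟫ • J) * (sld * sph⁻¹)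
            + (v - (v.re • (1:ℍ) + ⟪v,J⟫ • J))) * sph := by
      intro v
      rw [ellC_apply]
      conv_rhs => rw [add_mul, mul_assoc, hcsph]
    constructor
    · intro hnb
      by_contra hcp
      apply hnb
      rw [mem_perp_iff hJre] at hcp
      have hinj : Function.Injective ⇑(ellC J sld sph) := by
        refine (injective_iff_map_eq_zero _).mpr ?_
        intro v hv
        rw [hLform v] at hv
        rcases mul_eq_zero.mp hv with hM | h
        swap
        · exact absurd h hsne
        by_cases hq : v.re • (1:ℍ) + ⟪v,J⟫ • J = 0
        · rw [hq, zero_mul, zero_add, sub_zero] at hM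
          exact hM
        · exfalso
          have hqc : (v.re • (1:ℍ) + ⟪v,J⟫ • J) * (sld * sph⁻¹)
              = -(v - (v.re • (1:ℍ) + ⟪v,J⟫ • J)) := eq_neg_of_add_eq_zero_left hM
          have hab : v.re^2 + ⟪v,J⟫^2 ≠ 0 := by
            intro hzero
            apply hq
            have ha0 : v.re = 0 := by nlinarith [sq_nonneg v.re, sq_nonneg (⟪v,J⟫ : ℝ)]
            have hb0 : (⟪v,J⟫ : ℝ) = 0 := by nlinarith [sq_nonneg v.re, sq_nonneg (⟪v,J⟫ : ℝ)]
            rw [ha0, hb0, zero_smul, zero_smul, add_zero]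
          have hqcre : ((v.re • (1:ℍ) + ⟪v,J⟫ • J) * (sld * sph⁻¹)).re = 0 := by
            rw [hqc, Quaternion.re_neg, (hu v).1, neg_zero]
          have hqcJ : (((v.re • (1:ℍ) + ⟪v,J⟫ • J) * (sld * sph⁻¹)) * J).re = 0 := by
            rw [hqc, neg_mul, Quaternion.re_neg, (hu v).2, neg_zero]
          have hc_eq : sld * sph⁻¹ = (v.re^2 + ⟪v,J⟫^2)⁻¹ •
              ((v.re • (1:ℍ) + (-⟪v,J⟫) • J) *
                ((v.re • (1:ℍ) + ⟪v,J⟫ • J) * (sld * sph⁻¹))) := by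
            rw [← mul_assoc, cj_inv _ _ _ hJJ, smul_mul_assoc, one_mul, smul_smul,
              inv_mul_cancel₀ hab, one_smul]
          apply hcp
          constructor
          · rw [hc_eq]
            simp only [Quaternion.re_smul, smul_eq_mul]
            rw [(perp_mul hJJ v.re (-⟪v,J⟫) hqcre hqcJ).1, mul_zero]
          · rw [hc_eq, smul_mul_assoc]
            simp only [Quaternion.re_smul, smul_eq_mul]
            rw [(perp_mul hJJ v.re (-⟪v,J⟫) hqcre hqcJ).2, mul_zero]
      exact ⟨hinj, LinearMap.injective_iff_surjective.mp hinj⟩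
    · intro hcp hbij
      exfalso
      rw [mem_perp_iff hJre] at hcp
      obtain ⟨v, hv⟩ := hbij.2 sph
      rw [hLform v] at hv
      have h2 : ((v.re • (1:ℍ) + ⟪v,J⟫ • J) * (sld * sph⁻¹)
          + (v - (v.re • (1:ℍ) + ⟪v,J⟫ • J)) - 1) * sph = 0 := by
        rw [sub_mul, one_mul, hv, sub_self]
      have hone : (v.re • (1:ℍ) + ⟪v,J⟫ • J) * (sld * sph⁻¹)
          + (v - (v.re • (1:ℍ) + ⟪v,J⟫ • J)) = 1 := by
        rcases mul_eq_zero.mp h2 with h3 | h3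
        · exact sub_eq_zero.mp h3
        · exact absurd h3 hsne
      have hre := congrArg QuaternionAlgebra.re hone
      rw [Quaternion.re_add, (perp_mul hJJ v.re ⟪v,J⟫ hcp.1 hcp.2).1, (hu v).1] at hre
      simp at hre
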